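/- In the Drasin–Sastry parameter construction, for every constant C ≥ 1 one has liminf_{n→∞} [log log (C · L(2 r_n))] / [log log (2 r_n)] ≤ 1. -/

import Mathlib

open Filter Set



-- integrability of ν t / t on [1,b] from monotonicity of ν
lemma ds_integrable {ν : ℝ → ℝ} {b : ℝ} (hb : 1 ≤ b)
    (hmono : MonotoneOn ν (Icc 0 b)) :
    IntervalIntegrable (fun t => ν t / t) MeasureTheory.volume 1 b := by
  have h1 : uIcc (1:ℝ) b = Icc 1 b := uIcc_of_le hb
  have hi : IntervalIntegrable ν MeasureTheory.volume 1 b := by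
    apply MonotoneOn.intervalIntegrable
    apply hmono.mono
    rw [h1]
    exact Icc_subset_Icc (by norm_num) le_rfl
  have hc : ContinuousOn (fun t : ℝ => t⁻¹) (uIcc 1 b) := by
    rw [h1]
    exact ContinuousOn.inv₀ continuousOn_id (fun x hx => by
      have : (1:ℝ) ≤ x := hx.1; positivity)
  simpa [div_eq_mul_inv] using hi.mul_continuousOn hc

lemma ds_int_upper {ν : ℝ → ℝ} {b c : ℝ} (hb : 1 ≤ b)
    (hmono : MonotoneOn ν (Icc 0 b))
    (hbd : ∀ t ∈ Icc (1:ℝ) b, ν t ≤ c) :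
    (∫ t in (1:ℝ)..b, ν t / t) ≤ c * Real.log b := by
  have h0 : (0:ℝ) ∉ uIcc (1:ℝ) b := by
    rw [uIcc_of_le hb]; intro h; exact absurd h.1 (by norm_num)
  have hint : IntervalIntegrable (fun t : ℝ => c * (1 / t)) MeasureTheory.volume 1 b :=
    (ContinuousOn.intervalIntegrable (by
      apply ContinuousOn.mul continuousOn_const
      apply ContinuousOn.div continuousOn_const continuousOn_id
      intro x hx; rw [uIcc_of_le hb] at hx
      have : (1:ℝ) ≤ x := hx.1; positivity))
  calc (∫ t in (1:ℝ)..b, ν t / t) ≤ ∫ t in (1:ℝ)..b, c * (1 / t) := by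
        apply intervalIntegral.integral_mono_on hb (ds_integrable hb hmono) hint
        intro x hx
        have hx1 : (1:ℝ) ≤ x := hx.1
        have hx0 : (0:ℝ) < x := by positivity
        rw [mul_one_div]
        gcongr
        exact hbd x hx
    _ = c * Real.log b := by
        rw [intervalIntegral.integral_const_mul, integral_one_div h0, div_one]

lemma ds_int_lower {ν : ℝ → ℝ} {b c : ℝ} (hb : 1 ≤ b) (hc : 0 ≤ c)
    (hmono : MonotoneOn ν (Icc 0 b))
    (hbd : ∀ t ∈ Icc (1:ℝ) b, c ≤ ν t) :
    c * Real.log b ≤ ∫ t in (1:ℝ)..b, ν t / t := by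
  have h0 : (0:ℝ) ∉ uIcc (1:ℝ) b := by
    rw [uIcc_of_le hb]; intro h; exact absurd h.1 (by norm_num)
  have hint : IntervalIntegrable (fun t : ℝ => c * (1 / t)) MeasureTheory.volume 1 b :=
    (ContinuousOn.intervalIntegrable (by
      apply ContinuousOn.mul continuousOn_const
      apply ContinuousOn.div continuousOn_const continuousOn_id
      intro x hx; rw [uIcc_of_le hb] at hx
      have : (1:ℝ) ≤ x := hx.1; positivity))
  calc c * Real.log b = ∫ t in (1:ℝ)..b, c * (1 / t) := by
        rw [intervalIntegral.integral_const_mul, integral_one_div h0, div_one]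
    _ ≤ ∫ t in (1:ℝ)..b, ν t / t := by
        apply intervalIntegral.integral_mono_on hb hint (ds_integrable hb hmono)
        intro x hx
        have hx1 : (1:ℝ) ≤ x := hx.1
        have hx0 : (0:ℝ) < x := by positivity
        rw [mul_one_div]
        gcongr
        exact hbd x hx


section
variable {ν : ℝ → ℝ} {r : ℕ → ℝ} {n₀ : ℕ} {R' : ℝ}

lemma ds_inv (hn₀ : 2 ≤ n₀) (hR' : 4 < R')
    (hν₀ : ∀ t : ℝ, 0 ≤ t → t ≤ R' → ν t = n₀)
    (hrn₀ : r n₀ = R')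
    (hrec : ∀ n : ℕ, n₀ ≤ n → r (n + 1) = Real.exp (∫ t in (1 : ℝ)..(r n), ν t / t))
    (hνlin : ∀ n : ℕ, n₀ ≤ n → ∀ t : ℝ, r n ≤ t → t ≤ r (n + 1) →
      ν t = (t - r n) / (r (n + 1) - r n) + n) :
    ∀ n : ℕ, n₀ ≤ n →
      (R' ≤ r n ∧ MonotoneOn ν (Icc 0 (r n)) ∧
        (∀ t ∈ Icc (0:ℝ) (r n), (n₀:ℝ) ≤ ν t ∧ ν t ≤ n)) ∧
      r n ^ 2 ≤ r (n + 1) := by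
  -- first the triple, by induction
  have key : ∀ n : ℕ, n₀ ≤ n →
      (R' ≤ r n ∧ MonotoneOn ν (Icc 0 (r n)) ∧
        (∀ t ∈ Icc (0:ℝ) (r n), (n₀:ℝ) ≤ ν t ∧ ν t ≤ n)) → r n ^ 2 ≤ r (n + 1) := by
    intro n hn ⟨hRr, hmono, hbd⟩
    have hr1 : (1:ℝ) ≤ r n := by linarith
    have hlow : (2:ℝ) * Real.log (r n) ≤ ∫ t in (1:ℝ)..(r n), ν t / t := by
      apply ds_int_lower hr1 (by norm_num) hmono
      intro t ht
      have := (hbd t ⟨by linarith [ht.1], ht.2⟩).1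
      have h2 : (2:ℝ) ≤ (n₀:ℝ) := by exact_mod_cast hn₀
      linarith
    rw [hrec n hn]
    have hrpos : (0:ℝ) < r n := by linarith
    calc r n ^ 2 = Real.exp (2 * Real.log (r n)) := by
          rw [show (2:ℝ) * Real.log (r n) = Real.log (r n ^ 2) by
                rw [Real.log_pow]; push_cast; ring,
              Real.exp_log (by positivity)]
      _ ≤ _ := Real.exp_le_exp.2 hlow
  have triple : ∀ n : ℕ, n₀ ≤ n →
      R' ≤ r n ∧ MonotoneOn ν (Icc 0 (r n)) ∧
        (∀ t ∈ Icc (0:ℝ) (r n), (n₀:ℝ) ≤ ν t ∧ ν t ≤ n) := by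
    intro n hn
    induction n, hn using Nat.le_induction with
    | base =>
      refine ⟨hrn₀.ge, ?_, ?_⟩
      · intro x hx y hy _
        rw [hν₀ x hx.1 (hrn₀ ▸ hx.2), hν₀ y hy.1 (hrn₀ ▸ hy.2)]
      · intro t ht
        rw [hν₀ t ht.1 (hrn₀ ▸ ht.2)]
        exact ⟨le_rfl, le_rfl⟩
    | succ n hn ih =>
      obtain ⟨hRr, hmono, hbd⟩ := ih
      have hgrow := key n hn ⟨hRr, hmono, hbd⟩
      have hr4 : (4:ℝ) < r n := lt_of_lt_of_le hR' hRr
      have hlt : r n < r (n + 1) := by nlinarith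
      have hΔ : (0:ℝ) < r (n + 1) - r n := by linarith
      have hpiece : ∀ t : ℝ, r n ≤ t → t ≤ r (n + 1) →
          (n:ℝ) ≤ ν t ∧ ν t ≤ (n:ℝ) + 1 := by
        intro t ht1 ht2
        rw [hνlin n hn t ht1 ht2]
        constructor
        · have : 0 ≤ (t - r n) / (r (n + 1) - r n) := div_nonneg (by linarith) hΔ.le
          linarith
        · have : (t - r n) / (r (n + 1) - r n) ≤ 1 := by
            rw [div_le_one hΔ]; linarith
          linarith
      have hn₀n : (n₀:ℝ) ≤ (n:ℝ) := by exact_mod_cast hn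
      refine ⟨le_trans hRr hlt.le, ?_, ?_⟩
      · -- monotone on Icc 0 (r (n+1))
        intro x hx y hy hxy
        rcases le_total x (r n) with hxr | hxr
        · rcases le_total y (r n) with hyr | hyr
          · exact hmono ⟨hx.1, hxr⟩ ⟨hy.1, hyr⟩ hxy
          · have h1 : ν x ≤ (n:ℝ) := (hbd x ⟨hx.1, hxr⟩).2
            have h2 := (hpiece y hyr hy.2).1
            linarith
        · have h1 := hνlin n hn x hxr hx.2
          have h2 := hνlin n hn y (le_trans hxr hxy) hy.2
          rw [h1, h2]
          have : (x - r n) / (r (n + 1) - r n) ≤ (y - r n) / (r (n + 1) - r n) := by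
            rw [div_le_div_iff₀ hΔ hΔ]; nlinarith
          linarith
      · intro t ht
        rcases le_total t (r n) with htr | htr
        · obtain ⟨h1, h2⟩ := hbd t ⟨ht.1, htr⟩
          refine ⟨h1, ?_⟩
          push_cast
          linarith
        · obtain ⟨h1, h2⟩ := hpiece t htr ht.2
          refine ⟨by linarith, by push_cast; linarith⟩
  intro n hn
  exact ⟨triple n hn, key n hn (triple n hn)⟩

end


section
variable {ν : ℝ → ℝ} {r : ℕ → ℝ} {n₀ : ℕ} {R' : ℝ}

-- growth: 2^(n-n₀) ≤ log (r n), assuming facts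
lemma ds_growth (hR' : 4 < R') (hrn₀ : r n₀ = R')
    (hsq : ∀ n : ℕ, n₀ ≤ n → R' ≤ r n ∧ r n ^ 2 ≤ r (n + 1)) :
    ∀ n : ℕ, n₀ ≤ n → (2:ℝ) ^ (n - n₀) ≤ Real.log (r n) := by
  have hlog4 : (1:ℝ) < Real.log R' := by
    rw [show (1:ℝ) = Real.log (Real.exp 1) by rw [Real.log_exp]]
    apply Real.log_lt_log (Real.exp_pos 1)
    calc Real.exp 1 < 2.7182818286 := Real.exp_one_lt_d9
      _ < 4 := by norm_num
      _ < R' := hR'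
  intro n hn
  induction n, hn using Nat.le_induction with
  | base => simpa [hrn₀] using hlog4.le
  | succ n hn ih =>
    obtain ⟨hRr, hsq'⟩ := hsq n hn
    have hrpos : (0:ℝ) < r n := by linarith
    have h2 : 2 * Real.log (r n) ≤ Real.log (r (n + 1)) := by
      calc 2 * Real.log (r n) = Real.log (r n ^ 2) := by
            rw [Real.log_pow]; push_cast; ring
        _ ≤ _ := Real.log_le_log (by positivity) hsq'
    rw [Nat.succ_sub hn, pow_succ]
    calc (2:ℝ) ^ (n - n₀) * 2 ≤ Real.log (r n) * 2 := by nlinarith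
      _ ≤ Real.log (r (n + 1)) := by linarith

end


section
variable {ν : ℝ → ℝ} {r : ℕ → ℝ} {n₀ : ℕ} {R' : ℝ}

lemma ds_tendsto (n₀ : ℕ) (C : ℝ) (hC : 1 ≤ C) :
    Tendsto (fun n : ℕ => 1 + Real.log (Real.log C + n + 1) / (((n:ℝ) - n₀) * Real.log 2))
      atTop (nhds 1) := by
  set m : ℕ → ℝ := fun n => Real.log C + n + 1 with hm
  set d : ℕ → ℝ := fun n => (n:ℝ) - n₀ with hd
  have ht_m : Tendsto m atTop atTop := by
    have h := tendsto_atTop_add_const_right atTop (Real.log C + 1) tendsto_natCast_atTop_atTop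
    exact h.congr (fun n => by simp [hm]; ring)
  have ht_d : Tendsto d atTop atTop := by
    have h := tendsto_atTop_add_const_right atTop (-(n₀:ℝ)) tendsto_natCast_atTop_atTop
    exact h.congr (fun n => by simp [hd]; ring)
  have h1 : Tendsto (fun n : ℕ => Real.log (m n) / m n) atTop (nhds 0) := by
    have := (Real.isLittleO_log_id_atTop.tendsto_div_nhds_zero).comp ht_m
    exact this
  have hmd : Tendsto (fun n : ℕ => m n / d n) atTop (nhds 1) := by
    have hc0 : Tendsto (fun n : ℕ => (Real.log C + 1 + n₀) / d n) atTop (nhds 0) :=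
      tendsto_const_nhds.div_atTop ht_d
    have h2 : Tendsto (fun n : ℕ => 1 + (Real.log C + 1 + n₀) / d n) atTop (nhds 1) := by
      simpa using tendsto_const_nhds.add hc0
    apply h2.congr'
    filter_upwards [eventually_ge_atTop (n₀ + 1)] with n hn
    have hdn : (1:ℝ) ≤ d n := by
      simp only [hd]
      have : (n₀:ℝ) + 1 ≤ (n:ℝ) := by exact_mod_cast hn
      linarith
    have hdne : d n ≠ 0 := by linarith
    field_simp [hm, hd]
    ring
  have hq : Tendsto (fun n : ℕ => Real.log (m n) / (d n * Real.log 2)) atTop (nhds 0) := by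
    have hprod := h1.mul (hmd.mul (tendsto_const_nhds (x := 1 / Real.log 2)))
    rw [show (0:ℝ) * (1 * (1 / Real.log 2)) = 0 by ring] at hprod
    apply hprod.congr'
    filter_upwards [eventually_ge_atTop (n₀ + 1)] with n hn
    have hdn : (1:ℝ) ≤ d n := by
      simp only [hd]
      have : (n₀:ℝ) + 1 ≤ (n:ℝ) := by exact_mod_cast hn
      linarith
    have hmn : (0:ℝ) < m n := by
      have : (0:ℝ) ≤ Real.log C := Real.log_nonneg hC
      have : (0:ℝ) ≤ (n:ℝ) := Nat.cast_nonneg n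
      simp only [hm]; positivity
    have hl2 : (0:ℝ) < Real.log 2 := Real.log_pos (by norm_num)
    field_simp
  simpa using (tendsto_const_nhds (x := (1:ℝ))).add hq

end


section
variable {ν : ℝ → ℝ} {r : ℕ → ℝ} {n₀ : ℕ} {R' : ℝ}

-- per-n estimate
lemma ds_pointwise (hn₀ : 2 ≤ n₀) (hR' : 4 < R')
    (L : ℝ → ℝ) (hL : ∀ s : ℝ, L s = Real.exp (∫ t in (1 : ℝ)..s, ν t / t))
    (C : ℝ) (hC : 1 ≤ C) (n : ℕ) (hn : n₀ + 1 ≤ n)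
    (hRr : R' ≤ r n)
    (hmono : MonotoneOn ν (Icc 0 (r (n + 1))))
    (hbd : ∀ t ∈ Icc (0:ℝ) (r (n + 1)), (n₀:ℝ) ≤ ν t ∧ ν t ≤ (n:ℝ) + 1)
    (hsq : r n ^ 2 ≤ r (n + 1))
    (hG : (2:ℝ) ^ (n - n₀) ≤ Real.log (r n)) :
    0 ≤ Real.log (Real.log (C * L (2 * r n))) / Real.log (Real.log (2 * r n)) ∧
    Real.log (Real.log (C * L (2 * r n))) / Real.log (Real.log (2 * r n)) ≤
      1 + Real.log (Real.log C + n + 1) / (((n:ℝ) - n₀) * Real.log 2) := by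
  have hr4 : (4:ℝ) < r n := lt_of_lt_of_le hR' hRr
  set b : ℝ := 2 * r n with hb
  have hb8 : (8:ℝ) < b := by simp only [hb]; linarith
  have hb1 : (1:ℝ) ≤ b := by linarith
  have h2r : b ≤ r (n + 1) := by
    have : b ≤ r n ^ 2 := by nlinarith
    linarith
  have hmono' : MonotoneOn ν (Icc 0 b) := hmono.mono (Icc_subset_Icc le_rfl h2r)
  set D : ℝ := Real.log b with hD
  have hD2 : (2:ℝ) < D := by
    rw [hD, show (2:ℝ) = Real.log (Real.exp 2) by rw [Real.log_exp]]
    apply Real.log_lt_log (Real.exp_pos 2)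
    have he : Real.exp 1 < 2.7182818286 := Real.exp_one_lt_d9
    have h0 : (0:ℝ) < Real.exp 1 := Real.exp_pos 1
    calc Real.exp 2 = Real.exp 1 * Real.exp 1 := by
          rw [← Real.exp_add]; norm_num
      _ < 8 := by nlinarith
      _ < b := hb8
  -- integral bounds
  have hup : (∫ t in (1:ℝ)..b, ν t / t) ≤ ((n:ℝ) + 1) * D := by
    apply ds_int_upper hb1 hmono'
    intro t ht
    exact (hbd t ⟨by linarith [ht.1], le_trans ht.2 h2r⟩).2
  have hlow : 2 * D ≤ ∫ t in (1:ℝ)..b, ν t / t := by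
    apply ds_int_lower hb1 (by norm_num) hmono'
    intro t ht
    have h2 : (2:ℝ) ≤ (n₀:ℝ) := by exact_mod_cast hn₀
    have := (hbd t ⟨by linarith [ht.1], le_trans ht.2 h2r⟩).1
    linarith
  have hlogL : Real.log (L b) = ∫ t in (1:ℝ)..b, ν t / t := by
    rw [hL b, Real.log_exp]
  have hC0 : (0:ℝ) < C := by linarith
  have hL0 : (0:ℝ) < L b := by rw [hL b]; exact Real.exp_pos _
  have hlogC : (0:ℝ) ≤ Real.log C := Real.log_nonneg hC
  have hlogCL : Real.log (C * L b) = Real.log C + Real.log (L b) :=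
    Real.log_mul (ne_of_gt hC0) (ne_of_gt hL0)
  have hnum_lb : (4:ℝ) < Real.log (C * L b) := by
    rw [hlogCL, hlogL]; linarith
  -- numerator upper bound
  set A : ℝ := Real.log (Real.log C + n + 1) with hA
  have hA0 : (0:ℝ) ≤ A := by
    apply Real.log_nonneg
    have : (0:ℝ) ≤ (n:ℝ) := Nat.cast_nonneg n
    linarith
  have hnum : Real.log (Real.log (C * L b)) ≤ A + Real.log D := by
    have h1 : Real.log (C * L b) ≤ (Real.log C + ((n:ℝ) + 1)) * D := by
      rw [hlogCL, hlogL]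
      nlinarith
    calc Real.log (Real.log (C * L b)) ≤ Real.log ((Real.log C + ((n:ℝ) + 1)) * D) :=
          Real.log_le_log (by linarith) h1
      _ = A + Real.log D := by
          rw [Real.log_mul ?h1 ?h2, hA]
          · ring_nf
          case h1 =>
            have : (0:ℝ) ≤ (n:ℝ) := Nat.cast_nonneg n
            positivity
          case h2 => linarith
  -- denominator bounds
  have hl2 : (0:ℝ) < Real.log 2 := Real.log_pos (by norm_num)
  have hden_lb : ((n:ℝ) - (n₀:ℝ)) * Real.log 2 ≤ Real.log D := by
    have h1 : (2:ℝ) ^ (n - n₀) ≤ D := by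
      have : Real.log (r n) ≤ D := Real.log_le_log (by linarith) (by simp only [hb]; linarith)
      linarith
    calc ((n:ℝ) - (n₀:ℝ)) * Real.log 2 = Real.log ((2:ℝ) ^ (n - n₀)) := by
          rw [Real.log_pow]
          have : ((n - n₀ : ℕ) : ℝ) = (n:ℝ) - (n₀:ℝ) := by
            rw [Nat.cast_sub (by omega)]
          rw [this]
      _ ≤ Real.log D := Real.log_le_log (by positivity) h1
  have hdenpos : (0:ℝ) < ((n:ℝ) - (n₀:ℝ)) * Real.log 2 := by
    have : (n₀:ℝ) + 1 ≤ (n:ℝ) := by exact_mod_cast hn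
    have : (0:ℝ) < (n:ℝ) - (n₀:ℝ) := by linarith
    positivity
  have hlogD : (0:ℝ) < Real.log D := lt_of_lt_of_le hdenpos hden_lb
  have hnum0 : (0:ℝ) ≤ Real.log (Real.log (C * L b)) :=
    Real.log_nonneg (by linarith)
  constructor
  · exact div_nonneg hnum0 hlogD.le
  · calc Real.log (Real.log (C * L b)) / Real.log D ≤ (A + Real.log D) / Real.log D := by
          exact div_le_div_of_nonneg_right hnum hlogD.le
      _ = A / Real.log D + 1 := by field_simp
      _ ≤ A / (((n:ℝ) - (n₀:ℝ)) * Real.log 2) + 1 := by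
          have := div_le_div_of_nonneg_left hA0 hdenpos hden_lb
          linarith
      _ = 1 + Real.log (Real.log C + n + 1) / (((n:ℝ) - n₀) * Real.log 2) := by
          rw [hA]; ring
end

theorem drasinSastry_liminf_le_one (n₀ : ℕ) (hn₀ : 2 ≤ n₀) (R' : ℝ) (hR' : 4 < R')
    (ν : ℝ → ℝ) (r : ℕ → ℝ)
    (hν₀ : ∀ t : ℝ, 0 ≤ t → t ≤ R' → ν t = n₀)
    (hrn₀ : r n₀ = R')
    (hrec : ∀ n : ℕ, n₀ ≤ n → r (n + 1) = Real.exp (∫ t in (1 : ℝ)..(r n), ν t / t))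
    (hνlin : ∀ n : ℕ, n₀ ≤ n → ∀ t : ℝ, r n ≤ t → t ≤ r (n + 1) →
      ν t = (t - r n) / (r (n + 1) - r n) + n)
    (L : ℝ → ℝ) (hL : ∀ s : ℝ, L s = Real.exp (∫ t in (1 : ℝ)..s, ν t / t)) :
    ∀ C : ℝ, 1 ≤ C →
      Filter.liminf
        (fun n : ℕ => Real.log (Real.log (C * L (2 * r n))) / Real.log (Real.log (2 * r n)))
        atTop ≤ 1 := by
  intro C hC
  have H := ds_inv hn₀ hR' hν₀ hrn₀ hrec hνlin
  have hG := ds_growth hR' hrn₀ (fun n hn => ⟨(H n hn).1.1, (H n hn).2⟩)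
  set f : ℕ → ℝ :=
    fun n : ℕ => Real.log (Real.log (C * L (2 * r n))) / Real.log (Real.log (2 * r n)) with hf
  set g : ℕ → ℝ :=
    fun n : ℕ => 1 + Real.log (Real.log C + n + 1) / (((n:ℝ) - n₀) * Real.log 2) with hg
  have hpt : ∀ n : ℕ, n₀ + 1 ≤ n → 0 ≤ f n ∧ f n ≤ g n := by
    intro n hn
    have h1 := H n (by omega)
    have h2 := H (n + 1) (by omega)
    apply ds_pointwise hn₀ hR' L hL C hC n hn h1.1.1 h2.1.2.1 ?_ h1.2 (hG n (by omega))
    intro t ht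
    have := h2.1.2.2 t ht
    constructor
    · exact this.1
    · have h := this.2
      push_cast at h
      linarith
  have htend : Tendsto g atTop (nhds 1) := ds_tendsto n₀ C hC
  have hev : ∀ᶠ n in atTop, f n ≤ g n :=
    eventually_atTop.2 ⟨n₀ + 1, fun n hn => (hpt n hn).2⟩
  have h0 : ∀ᶠ n in atTop, (0:ℝ) ≤ f n :=
    eventually_atTop.2 ⟨n₀ + 1, fun n hn => (hpt n hn).1⟩
  calc liminf f atTop ≤ liminf g atTop :=
        liminf_le_liminf hev (isBoundedUnder_of_eventually_ge h0)
          (htend.isBoundedUnder_le.isCobounded_flip)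
    _ = 1 := htend.liminf_eq
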